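/- Let α>0. Assume that e^{λ₁x^α}·F̄(x)→∞ as x→∞ for some λ₁>0, and that Ḡ(x)>0 for all x≥0. Then the product convolution H satisfies e^{λx^α}·H̄(x)→∞ as x→∞ for every λ>0. -/
import Mathlib


open MeasureTheory ProbabilityTheory Filter Topology Asymptotics Set

noncomputable section

/-- The tail `P(X > x)` of a random variable `X` (as a real number). -/
def rvTail {Ω : Type*} [MeasurableSpace Ω] (μ : Measure Ω) (X : Ω → ℝ) (x : ℝ) : ℝ :=
  (μ {ω | x < X ω}).toReal

/-- The tail `V̄(x) = V((x,∞))` of a distribution (probability measure) on `ℝ`. -/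
def mTail (V : Measure ℝ) (x : ℝ) : ℝ := (V (Ioi x)).toReal

/-- The long-tailed class `ℒ`, described via the tail function:
`T̄(x) > 0` for all `x` and `T(x - t) ∼ T(x)` for each `t > 0`. -/
def IsLongTail (T : ℝ → ℝ) : Prop :=
  (∀ x, 0 < T x) ∧ ∀ t > 0, Tendsto (fun x => T (x - t) / T x) atTop (𝓝 1)

/-- The exponential class `ℒ(γ)`, described via the tail function:
`T(x) > 0` for all `x` and `T(x - t) ∼ e^{γ t} T(x)` for each real `t`. -/
def IsLgamma (γ : ℝ) (T : ℝ → ℝ) : Prop :=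
  (∀ x, 0 < T x) ∧ ∀ t : ℝ, Tendsto (fun x => T (x - t) / T x) atTop (𝓝 (Real.exp (γ * t)))

/-- The generalized long-tailed class `𝒪ℒ`, described via the tail function:
`T(x) > 0` for all `x` and `limsup_{x→∞} T(x - t)/T(x) < ∞` for each `t > 0`. -/
def IsOL (T : ℝ → ℝ) : Prop :=
  (∀ x, 0 < T x) ∧ ∀ t > 0, IsBoundedUnder (· ≤ ·) atTop (fun x => T (x - t) / T x)

/-- `C^*(T, t) = limsup_{x→∞} T(x-t)/T(x)`. -/
def Cstar (T : ℝ → ℝ) (t : ℝ) : ℝ := Filter.limsup (fun x => T (x - t) / T x) atTop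

/-- `C_*(T, t) = liminf_{x→∞} T(x-t)/T(x)`. -/
def Cflat (T : ℝ → ℝ) (t : ℝ) : ℝ := Filter.liminf (fun x => T (x - t) / T x) atTop

/-- if `e^{λ₁ x^α} F̄(x) → ∞` for some `λ₁ > 0` and `Ḡ > 0` on `[0,∞)`,
then `e^{λ x^α} H̄(x) → ∞` for every `λ > 0`. -/
theorem stmt_9 {Ω : Type*} [MeasurableSpace Ω] (μ : Measure Ω) [IsProbabilityMeasure μ]
    (X Y : Ω → ℝ) (hXm : Measurable X) (hYm : Measurable Y)
    (hXnn : ∀ ω, 0 ≤ X ω) (hYnn : ∀ ω, 0 ≤ Y ω)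
    (hindep : IndepFun X Y μ)
    (α : ℝ) (hα : 0 < α)
    (h1 : ∃ l₁ > (0:ℝ), Tendsto (fun x => Real.exp (l₁ * x ^ α) * rvTail μ X x) atTop atTop)
    (hGpos : ∀ x ≥ (0:ℝ), 0 < rvTail μ Y x) :
    ∀ l > (0:ℝ),
      Tendsto (fun x => Real.exp (l * x ^ α) * rvTail μ (fun ω => X ω * Y ω) x)
        atTop atTop := by
  obtain ⟨l₁, hl₁, hF⟩ := h1
  intro l hl
  set c : ℝ := max ((l₁ / l) ^ (1 / α)) 1 with hcdef
  have hc1 : (1:ℝ) ≤ c := le_max_right _ _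
  have hcpos : (0:ℝ) < c := lt_of_lt_of_le one_pos hc1
  have hG : 0 < rvTail μ Y c := hGpos c hcpos.le
  -- l₁ ≤ l * c ^ α
  have hcα : l₁ ≤ l * c ^ α := by
    have hle : (l₁ / l) ^ (1 / α) ≤ c := le_max_left _ _
    have h0 : l₁ / l ≤ c ^ α := by
      have : ((l₁ / l) ^ (1 / α)) ^ α ≤ c ^ α :=
        Real.rpow_le_rpow (Real.rpow_nonneg (by positivity) _) hle hα.le
      rwa [← Real.rpow_mul (by positivity), one_div,
        inv_mul_cancel₀ hα.ne', Real.rpow_one] at this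
    calc l₁ = l * (l₁ / l) := by field_simp
    _ ≤ l * c ^ α := by nlinarith
  -- the divided tendsto
  have hFc : Tendsto (fun x => Real.exp (l₁ * (x / c) ^ α) * rvTail μ X (x / c)) atTop atTop :=
    hF.comp (tendsto_id.atTop_div_const hcpos)
  have key : Tendsto (fun x => rvTail μ Y c * (Real.exp (l₁ * (x / c) ^ α) * rvTail μ X (x / c)))
      atTop atTop := hFc.const_mul_atTop hG
  refine tendsto_atTop_mono' atTop ?_ key
  filter_upwards [eventually_ge_atTop (0:ℝ)] with x hx
  -- measure inequality
  have hsub : (X ⁻¹' Ioi (x / c)) ∩ (Y ⁻¹' Ioi c) ⊆ {ω | x < X ω * Y ω} := by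
    intro ω ⟨h1, h2⟩
    simp only [mem_preimage, mem_Ioi] at h1 h2
    have : x / c * c < X ω * Y ω :=
      mul_lt_mul'' h1 h2 (by positivity) hcpos.le
    rwa [div_mul_cancel₀ _ hcpos.ne'] at this
  have hmeas : rvTail μ X (x / c) * rvTail μ Y c ≤ rvTail μ (fun ω => X ω * Y ω) x := by
    have hprod : μ ((X ⁻¹' Ioi (x / c)) ∩ (Y ⁻¹' Ioi c))
        = μ (X ⁻¹' Ioi (x / c)) * μ (Y ⁻¹' Ioi c) :=
      hindep.measure_inter_preimage_eq_mul _ _ measurableSet_Ioi measurableSet_Ioi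
    have hmono : μ ((X ⁻¹' Ioi (x / c)) ∩ (Y ⁻¹' Ioi c)) ≤ μ {ω | x < X ω * Y ω} :=
      measure_mono hsub
    have := ENNReal.toReal_mono (measure_ne_top μ _) hmono
    rw [hprod, ENNReal.toReal_mul] at this
    exact this
  -- exponent inequality
  have hexp : l₁ * (x / c) ^ α ≤ l * x ^ α := by
    rw [Real.div_rpow hx hcpos.le]
    have hxα : (0:ℝ) ≤ x ^ α := Real.rpow_nonneg hx _
    have hcα' : (0:ℝ) < c ^ α := Real.rpow_pos_of_pos hcpos _
    calc l₁ * (x ^ α / c ^ α) = (l₁ / c ^ α) * x ^ α := by ring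
    _ ≤ l * x ^ α := by
        apply mul_le_mul_of_nonneg_right _ hxα
        rw [div_le_iff₀ hcα']
        linarith
  calc rvTail μ Y c * (Real.exp (l₁ * (x / c) ^ α) * rvTail μ X (x / c))
      = Real.exp (l₁ * (x / c) ^ α) * (rvTail μ X (x / c) * rvTail μ Y c) := by ring
    _ ≤ Real.exp (l * x ^ α) * rvTail μ (fun ω => X ω * Y ω) x := by
        apply mul_le_mul (Real.exp_le_exp.mpr hexp) hmeas
        · exact mul_nonneg ENNReal.toReal_nonneg ENNReal.toReal_nonneg
        · positivity
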